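/- Let f = (1/n)Σ f_i where each f_i has both H-Lipschitz Hessian (spectral norm) and L_F-Lipschitz Hessian (Frobenius norm), f is μ-strongly convex, and ∇f(x*) = 0. For matrices H_i^k set l_i^k := ‖H_i^k − ∇²f_i(x^k)‖_F, H^k := (1/n)Σ H_i^k, l^k := (1/n)Σ l_i^k, and suppose H^k + l^k I ⪰ ∇²f(x^k) ⪰ μI. Then the iterate x^{k+1} = x^k − [H^k + l^k I]^{-1}∇f(x^k) satisfies ‖x^{k+1} − x*‖² ≤ (8/μ²)‖x^k − x*‖² H^k_err + ((H+2L_F)²/(2μ²))‖x^k − x*‖⁴, where H^k_err := (1/n)Σ_i ‖H_i^k − ∇²f_i(x*)‖_F². -/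

import Mathlib

open scoped RealInnerProductSpace

attribute [local instance] Matrix.frobeniusNormedAddCommGroup Matrix.frobeniusNormedSpace

/-- A matrix viewed as a continuous linear map on Euclidean space; its operator norm
is the spectral norm of the matrix. -/
noncomputable def Matrix.toCLM {d : ℕ} (A : Matrix (Fin d) (Fin d) ℝ) :
    EuclideanSpace ℝ (Fin d) →L[ℝ] EuclideanSpace ℝ (Fin d) :=
  LinearMap.toContinuousLinearMap (Matrix.toEuclideanLin A)

set_option maxHeartbeats 1000000

namespace FedNLAux

variable {d : ℕ}

lemma toCLM_add (M N : Matrix (Fin d) (Fin d) ℝ) :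
    Matrix.toCLM (M + N) = Matrix.toCLM M + Matrix.toCLM N := by
  unfold Matrix.toCLM; rw [map_add, map_add]

lemma toCLM_sub (M N : Matrix (Fin d) (Fin d) ℝ) :
    Matrix.toCLM (M - N) = Matrix.toCLM M - Matrix.toCLM N := by
  unfold Matrix.toCLM; rw [map_sub, map_sub]

lemma toCLM_smul (c : ℝ) (M : Matrix (Fin d) (Fin d) ℝ) :
    Matrix.toCLM (c • M) = c • Matrix.toCLM M := by
  unfold Matrix.toCLM; rw [map_smul, map_smul]

lemma toCLM_sum {ι : Type*} (s : Finset ι) (M : ι → Matrix (Fin d) (Fin d) ℝ) :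
    Matrix.toCLM (∑ i ∈ s, M i) = ∑ i ∈ s, Matrix.toCLM (M i) := by
  unfold Matrix.toCLM; rw [map_sum, map_sum]

lemma toCLM_one : Matrix.toCLM (1 : Matrix (Fin d) (Fin d) ℝ) = ContinuousLinearMap.id ℝ _ :=
  ContinuousLinearMap.ext fun v => by
    show Matrix.toEuclideanLin (1 : Matrix (Fin d) (Fin d) ℝ) v = v
    rw [Matrix.toEuclideanLin_apply, Matrix.one_mulVec]

lemma opNorm_toCLM_le (M : Matrix (Fin d) (Fin d) ℝ) : ‖Matrix.toCLM M‖ ≤ ‖M‖ := by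
  refine ContinuousLinearMap.opNorm_le_bound _ (norm_nonneg M) (fun v => ?_)
  have key : ‖Matrix.toCLM M v‖ ^ 2 ≤ (‖M‖ * ‖v‖) ^ 2 := by
    have h1 : ‖Matrix.toCLM M v‖ ^ 2 = ∑ i, (∑ j, M i j * v j) ^ 2 := by
      rw [EuclideanSpace.norm_eq, Real.sq_sqrt (by positivity)]
      congr 1; funext i
      rw [Real.norm_eq_abs, sq_abs]
      rfl
    have h2 : ‖v‖ ^ 2 = ∑ j, (v j) ^ 2 := by
      rw [EuclideanSpace.norm_eq, Real.sq_sqrt (by positivity)]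
      congr 1; funext j; rw [Real.norm_eq_abs, sq_abs]
    have h3 : ‖M‖ ^ 2 = ∑ i, ∑ j, (M i j) ^ 2 := by
      rw [Matrix.frobenius_norm_def]
      rw [← Real.rpow_natCast (((∑ i, ∑ j, ‖M i j‖ ^ (2:ℝ)) ^ (1/2 : ℝ))) 2]
      rw [← Real.rpow_mul (by positivity)]
      norm_num
    rw [mul_pow, h1, h2, h3, Finset.sum_mul]
    refine Finset.sum_le_sum (fun i _ => ?_)
    exact Finset.sum_mul_sq_le_sq_mul_sq Finset.univ (fun j => M i j) (fun j => v j)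
  have h := Real.sqrt_le_sqrt key
  rwa [Real.sqrt_sq (norm_nonneg _), Real.sqrt_sq (by positivity)] at h


set_option synthInstance.maxHeartbeats 1000000 in
set_option maxHeartbeats 1000000 in
lemma taylor_bound (g : EuclideanSpace ℝ (Fin d) → EuclideanSpace ℝ (Fin d))
    (B : EuclideanSpace ℝ (Fin d) → (EuclideanSpace ℝ (Fin d) →L[ℝ] EuclideanSpace ℝ (Fin d)))
    (hg : ∀ x, HasFDerivAt g (B x) x) (C : ℝ)
    (hLip : ∀ z w, ‖B z - B w‖ ≤ C * ‖z - w‖) (x y : EuclideanSpace ℝ (Fin d)) :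
    ‖g y - g x - B x (y - x)‖ ≤ C / 2 * ‖y - x‖ ^ 2 := by
  set u := y - x with hu
  have hφ : ∀ t : ℝ, HasDerivAt (fun s : ℝ => g (x + s • u)) (B (x + t • u) u) t := by
    intro t
    have hpath : HasDerivAt (fun s : ℝ => x + s • u) u t := by
      simpa using ((hasDerivAt_id t).smul_const u).const_add x
    exact (hg (x + t • u)).comp_hasDerivAt t hpath
  -- the integrand is Lipschitz, hence continuous and interval-integrable
  have hcont : Continuous (fun t : ℝ => B (x + t • u) u) := by
    have : LipschitzWith (Real.toNNReal (C * ‖u‖ ^ 2)) (fun t : ℝ => B (x + t • u) u) := by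
      refine LipschitzWith.of_dist_le_mul (fun a b => ?_)
      rw [dist_eq_norm, dist_eq_norm]
      have h1 : ‖B (x + a • u) u - B (x + b • u) u‖ ≤ C * ‖u‖ ^ 2 * ‖a - b‖ := by
        have h2 := (B (x + a • u) - B (x + b • u)).le_opNorm u
        simp only [ContinuousLinearMap.sub_apply] at h2
        refine h2.trans ?_
        have h3 := hLip (x + a • u) (x + b • u)
        have h4 : (x + a • u) - (x + b • u) = (a - b) • u := by
          rw [sub_smul]; abel
        rw [h4, norm_smul] at h3
        calc ‖B (x + a • u) - B (x + b • u)‖ * ‖u‖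
            ≤ (C * (‖a - b‖ * ‖u‖)) * ‖u‖ :=
              mul_le_mul_of_nonneg_right h3 (norm_nonneg u)
          _ = C * ‖u‖ ^ 2 * ‖a - b‖ := by ring
      refine h1.trans (mul_le_mul_of_nonneg_right (Real.le_coe_toNNReal _) (norm_nonneg _))
    exact this.continuous
  have hint : IntervalIntegrable (fun t : ℝ => B (x + t • u) u) MeasureTheory.volume 0 1 :=
    hcont.intervalIntegrable 0 1
  have hftc : ∫ t in (0:ℝ)..1, B (x + t • u) u = g y - g x := by
    rw [intervalIntegral.integral_eq_sub_of_hasDerivAt (fun t _ => hφ t) hint]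
    have hxy : x + u = y := by rw [hu]; abel
    simp [hxy]
  have hrepr : g y - g x - B x u = ∫ t in (0:ℝ)..1, (B (x + t • u) u - B x u) := by
    rw [intervalIntegral.integral_sub hint (intervalIntegrable_const), hftc,
      intervalIntegral.integral_const]
    simp
  rw [hrepr]
  have hbd : ‖∫ t in (0:ℝ)..1, (B (x + t • u) u - B x u)‖ ≤
      |∫ t in (0:ℝ)..1, C * ‖u‖ ^ 2 * t| := by
    refine intervalIntegral.norm_integral_le_abs_of_norm_le ?_ ?_
    · filter_upwards [MeasureTheory.ae_restrict_mem measurableSet_uIoc] with t ht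
      have ht0 : 0 < t := by
        rcases Set.mem_uIoc.1 ht with h | h
        · exact h.1
        · exact absurd h (by rintro ⟨h1, h2⟩; linarith)
      · have h2 := (B (x + t • u) - B x).le_opNorm u
        simp only [ContinuousLinearMap.sub_apply] at h2
        refine h2.trans ?_
        have h3 := hLip (x + t • u) x
        have h4 : (x + t • u) - x = t • u := by abel
        rw [h4, norm_smul, Real.norm_eq_abs, abs_of_pos ht0] at h3
        calc ‖B (x + t • u) - B x‖ * ‖u‖ ≤ (C * (t * ‖u‖)) * ‖u‖ :=
              mul_le_mul_of_nonneg_right h3 (norm_nonneg u)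
          _ = C * ‖u‖ ^ 2 * t := by ring
    · exact (continuous_const.mul continuous_id).intervalIntegrable 0 1
  refine hbd.trans ?_
  rw [intervalIntegral.integral_const_mul, integral_id]
  have hCu : 0 ≤ C * ‖u‖ :=
    le_trans (norm_nonneg (B y - B x)) (by simpa [hu] using hLip y x)
  have hun : 0 ≤ ‖u‖ := norm_nonneg u
  rw [abs_of_nonneg (by nlinarith)]
  nlinarith

end FedNLAux


/-- one step of FedNL (Option 2),
`x^{k+1} = x^k − [H^k + l^k I]⁻¹ ∇f(x^k)`. -/
theorem fednl_option2_one_step {d n : ℕ} (hn : 0 < n)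
    (f : EuclideanSpace ℝ (Fin d) → ℝ)
    (g : EuclideanSpace ℝ (Fin d) → EuclideanSpace ℝ (Fin d))
    (Hess : Fin n → EuclideanSpace ℝ (Fin d) → Matrix (Fin d) (Fin d) ℝ)
    (Hs LF μ : ℝ) (hμ : 0 < μ) (xstar : EuclideanSpace ℝ (Fin d))
    (hgrad : ∀ x, HasGradientAt f (g x) x)
    -- the Hessian of `f` is the average of the local Hessians
    (hHess : ∀ x, HasFDerivAt g (Matrix.toCLM ((n : ℝ)⁻¹ • ∑ i, Hess i x)) x)
    -- `μ`-strong convexity of `f`: `∇²f(x) ⪰ μ I`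
    (hsc : ∀ x v, μ * ‖v‖ ^ 2 ≤ ⟪Matrix.toCLM ((n : ℝ)⁻¹ • ∑ i, Hess i x) v, v⟫)
    -- each local Hessian is `Hs`-Lipschitz in the spectral norm
    (hLipS : ∀ i x y, ‖Matrix.toCLM (Hess i x) - Matrix.toCLM (Hess i y)‖ ≤ Hs * ‖x - y‖)
    -- each local Hessian is `LF`-Lipschitz in the Frobenius norm
    (hLipF : ∀ i x y, ‖Hess i x - Hess i y‖ ≤ LF * ‖x - y‖)
    (hstar : g xstar = 0)
    (Hk : Fin n → Matrix (Fin d) (Fin d) ℝ)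
    (xk xnext : EuclideanSpace ℝ (Fin d))
    -- the corrected Hessian estimate `A = H^k + l^k I`
    (A : Matrix (Fin d) (Fin d) ℝ)
    (hA : A = (n : ℝ)⁻¹ • ∑ i, Hk i +
      ((n : ℝ)⁻¹ * ∑ i, ‖Hk i - Hess i xk‖) • (1 : Matrix (Fin d) (Fin d) ℝ))
    -- `H^k + l^k I ⪰ ∇²f(x^k)`
    (hdom : ∀ v, ⟪Matrix.toCLM ((n : ℝ)⁻¹ • ∑ i, Hess i xk) v, v⟫ ≤ ⟪Matrix.toCLM A v, v⟫)
    (Ainv : EuclideanSpace ℝ (Fin d) →L[ℝ] EuclideanSpace ℝ (Fin d))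
    (hinv1 : Ainv.comp (Matrix.toCLM A) = ContinuousLinearMap.id ℝ _)
    (hinv2 : (Matrix.toCLM A).comp Ainv = ContinuousLinearMap.id ℝ _)
    (hiter : xnext = xk - Ainv (g xk)) :
    ‖xnext - xstar‖ ^ 2 ≤
      8 / μ ^ 2 * ‖xk - xstar‖ ^ 2 * ((n : ℝ)⁻¹ * ∑ i, ‖Hk i - Hess i xstar‖ ^ 2) +
        (Hs + 2 * LF) ^ 2 / (2 * μ ^ 2) * ‖xk - xstar‖ ^ 4 := by
  have hn' : (0:ℝ) < n := Nat.cast_pos.2 hn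
  let B : EuclideanSpace ℝ (Fin d) → (EuclideanSpace ℝ (Fin d) →L[ℝ] EuclideanSpace ℝ (Fin d)) :=
    fun x => Matrix.toCLM ((n : ℝ)⁻¹ • ∑ i, Hess i x)
  set u : EuclideanSpace ℝ (Fin d) := xk - xstar with hu
  set r : ℝ := ‖u‖ with hr
  set l : ℝ := (n : ℝ)⁻¹ * ∑ i, ‖Hk i - Hess i xk‖ with hl
  set lb : ℝ := (n : ℝ)⁻¹ * ∑ i, ‖Hk i - Hess i xstar‖ with hlb
  set S : ℝ := (n : ℝ)⁻¹ * ∑ i, ‖Hk i - Hess i xstar‖ ^ 2 with hS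
  have hr0 : 0 ≤ r := norm_nonneg u
  have hlb0 : 0 ≤ lb := by
    rw [hlb]
    exact mul_nonneg (inv_nonneg.2 hn'.le) (Finset.sum_nonneg fun i _ => norm_nonneg _)
  -- Lipschitz continuity of the averaged Hessian
  have hBLip : ∀ z w, ‖B z - B w‖ ≤ Hs * ‖z - w‖ := by
    intro z w
    have hrw : B z - B w =
        (n : ℝ)⁻¹ • ∑ i, (Matrix.toCLM (Hess i z) - Matrix.toCLM (Hess i w)) := by
      simp only [B]
      simp only [FedNLAux.toCLM_smul, FedNLAux.toCLM_sum]
      rw [Finset.sum_sub_distrib, smul_sub]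
    rw [hrw]
    have hns := norm_smul_le ((n : ℝ)⁻¹)
      (∑ i, (Matrix.toCLM (Hess i z) - Matrix.toCLM (Hess i w)))
    rw [Real.norm_eq_abs, abs_of_nonneg (inv_nonneg.2 hn'.le)] at hns
    refine le_trans hns ?_
    calc (n : ℝ)⁻¹ * ‖∑ i, (Matrix.toCLM (Hess i z) - Matrix.toCLM (Hess i w))‖
        ≤ (n : ℝ)⁻¹ * ∑ i, ‖Matrix.toCLM (Hess i z) - Matrix.toCLM (Hess i w)‖ :=
          mul_le_mul_of_nonneg_left (norm_sum_le _ _) (by positivity)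
      _ ≤ (n : ℝ)⁻¹ * ∑ _i : Fin n, Hs * ‖z - w‖ :=
          mul_le_mul_of_nonneg_left (Finset.sum_le_sum fun i _ => hLipS i z w) (by positivity)
      _ = Hs * ‖z - w‖ := by
          rw [Finset.sum_const, Finset.card_univ, Fintype.card_fin, nsmul_eq_mul]
          field_simp
  -- Taylor bound
  have hT : ‖g xk - g xstar - B xstar (xk - xstar)‖ ≤ Hs / 2 * ‖xk - xstar‖ ^ 2 :=
    FedNLAux.taylor_bound g B hHess Hs hBLip xstar xk
  -- coercivity of A
  have hcoer : ∀ v, μ * ‖v‖ ≤ ‖Matrix.toCLM A v‖ := by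
    intro v
    have h1 := (hsc xk v).trans (hdom v)
    have h2 : ⟪Matrix.toCLM A v, v⟫ ≤ ‖Matrix.toCLM A v‖ * ‖v‖ := real_inner_le_norm _ _
    rcases eq_or_lt_of_le (norm_nonneg v) with hv | hv
    · rw [← hv]; simp [norm_nonneg]
    · nlinarith [h1.trans h2]
  -- A applied to the error
  have hAinv : Matrix.toCLM A (Ainv (g xk)) = g xk := by
    have := congrArg (fun L : EuclideanSpace ℝ (Fin d) →L[ℝ] EuclideanSpace ℝ (Fin d) =>
      L (g xk)) hinv2
    simpa using this
  have hAe : Matrix.toCLM A (xnext - xstar) = Matrix.toCLM A u - g xk := by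
    have hx : xnext - xstar = u - Ainv (g xk) := by rw [hiter, hu]; abel
    rw [hx, map_sub, hAinv]
  -- bound on ‖toCLM A - B xstar‖
  have hmat : A - (n : ℝ)⁻¹ • ∑ i, Hess i xstar
      = (n : ℝ)⁻¹ • ∑ i, (Hk i - Hess i xstar) + l • (1 : Matrix (Fin d) (Fin d) ℝ) := by
    rw [hA, Finset.sum_sub_distrib, smul_sub]
    abel
  have hdiff : Matrix.toCLM A - B xstar
      = Matrix.toCLM ((n : ℝ)⁻¹ • ∑ i, (Hk i - Hess i xstar))
        + l • ContinuousLinearMap.id ℝ (EuclideanSpace ℝ (Fin d)) := by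
    show Matrix.toCLM A - Matrix.toCLM ((n : ℝ)⁻¹ • ∑ i, Hess i xstar) = _
    rw [← FedNLAux.toCLM_sub, hmat, FedNLAux.toCLM_add, FedNLAux.toCLM_smul l,
      FedNLAux.toCLM_one]
  have hnorm1 : ‖Matrix.toCLM ((n : ℝ)⁻¹ • ∑ i, (Hk i - Hess i xstar))‖ ≤ lb := by
    refine (FedNLAux.opNorm_toCLM_le _).trans ?_
    have hns := norm_smul_le ((n : ℝ)⁻¹) (∑ i, (Hk i - Hess i xstar))
    rw [Real.norm_eq_abs, abs_of_nonneg (inv_nonneg.2 hn'.le)] at hns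
    refine le_trans hns ?_
    rw [hlb]
    exact mul_le_mul_of_nonneg_left (norm_sum_le _ _) (inv_nonneg.2 hn'.le)
  have hl_le : l ≤ lb + LF * r := by
    rw [hl, hlb]
    have hstep : ∀ i : Fin n, ‖Hk i - Hess i xk‖ ≤ ‖Hk i - Hess i xstar‖ + LF * r := by
      intro i
      have h1 : Hk i - Hess i xk = (Hk i - Hess i xstar) + (Hess i xstar - Hess i xk) := by abel
      have h2 := hLipF i xstar xk
      have h3 : ‖xstar - xk‖ = r := by rw [hr, hu, norm_sub_rev]
      rw [h3] at h2
      calc ‖Hk i - Hess i xk‖ ≤ ‖Hk i - Hess i xstar‖ + ‖Hess i xstar - Hess i xk‖ := by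
            rw [h1]; exact norm_add_le _ _
        _ ≤ ‖Hk i - Hess i xstar‖ + LF * r := by linarith
    calc (n : ℝ)⁻¹ * ∑ i, ‖Hk i - Hess i xk‖
        ≤ (n : ℝ)⁻¹ * ∑ i, (‖Hk i - Hess i xstar‖ + LF * r) :=
          mul_le_mul_of_nonneg_left (Finset.sum_le_sum fun i _ => hstep i) (by positivity)
      _ = (n : ℝ)⁻¹ * ∑ i, ‖Hk i - Hess i xstar‖ + LF * r := by
          rw [Finset.sum_add_distrib, mul_add, Finset.sum_const, Finset.card_univ,
            Fintype.card_fin, nsmul_eq_mul]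
          field_simp
  have hl0 : 0 ≤ l := by
    rw [hl]
    exact mul_nonneg (inv_nonneg.2 hn'.le) (Finset.sum_nonneg fun i _ => norm_nonneg _)
  have hAB : ‖Matrix.toCLM A - B xstar‖ ≤ 2 * lb + LF * r := by
    rw [hdiff]
    refine (norm_add_le _ _).trans ?_
    have h4 : ‖l • ContinuousLinearMap.id ℝ (EuclideanSpace ℝ (Fin d))‖ ≤ l := by
      have hns := norm_smul_le l (ContinuousLinearMap.id ℝ (EuclideanSpace ℝ (Fin d)))
      rw [Real.norm_eq_abs, abs_of_nonneg hl0] at hns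
      refine le_trans hns ?_
      calc l * ‖ContinuousLinearMap.id ℝ (EuclideanSpace ℝ (Fin d))‖ ≤ l * 1 :=
            mul_le_mul_of_nonneg_left ContinuousLinearMap.norm_id_le hl0
        _ = l := mul_one l
    linarith
  -- key bound
  have hkey : μ * ‖xnext - xstar‖ ≤ (2 * lb + LF * r) * r + Hs / 2 * r ^ 2 := by
    refine (hcoer _).trans ?_
    rw [hAe]
    have hsplit : Matrix.toCLM A u - g xk
        = (Matrix.toCLM A - B xstar) u - (g xk - g xstar - B xstar u) := by
      rw [hstar]
      simp only [ContinuousLinearMap.sub_apply, sub_zero]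
      abel
    rw [hsplit]
    refine (norm_sub_le _ _).trans ?_
    have e1 : ‖(Matrix.toCLM A - B xstar) u‖ ≤ (2 * lb + LF * r) * r :=
      ((Matrix.toCLM A - B xstar).le_opNorm u).trans
        (mul_le_mul_of_nonneg_right hAB (norm_nonneg u))
    have e2 : ‖g xk - g xstar - B xstar u‖ ≤ Hs / 2 * r ^ 2 := hT
    linarith
  -- Cauchy–Schwarz on the averages
  have hlb_sq : lb ^ 2 ≤ S := by
    have hcs := sq_sum_le_card_mul_sum_sq
      (s := (Finset.univ : Finset (Fin n))) (f := fun i => ‖Hk i - Hess i xstar‖)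
    rw [Finset.card_univ, Fintype.card_fin] at hcs
    have : lb ^ 2 = (n : ℝ)⁻¹ ^ 2 * (∑ i, ‖Hk i - Hess i xstar‖) ^ 2 := by
      rw [hlb]; ring
    rw [this, hS]
    calc (n : ℝ)⁻¹ ^ 2 * (∑ i, ‖Hk i - Hess i xstar‖) ^ 2
        ≤ (n : ℝ)⁻¹ ^ 2 * ((n : ℝ) * ∑ i, ‖Hk i - Hess i xstar‖ ^ 2) :=
          mul_le_mul_of_nonneg_left hcs (by positivity)
      _ = (n : ℝ)⁻¹ * ∑ i, ‖Hk i - Hess i xstar‖ ^ 2 := by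
          field_simp
  -- final algebra
  have h0 : 0 ≤ μ * ‖xnext - xstar‖ := by positivity
  have hsq : (μ * ‖xnext - xstar‖) ^ 2 ≤ ((2 * lb + LF * r) * r + Hs / 2 * r ^ 2) ^ 2 :=
    pow_le_pow_left₀ h0 hkey 2
  have hμ2 : (0:ℝ) < μ ^ 2 := by positivity
  have hfin : μ ^ 2 * ‖xnext - xstar‖ ^ 2
      ≤ 8 * S * r ^ 2 + (Hs + 2 * LF) ^ 2 / 2 * r ^ 4 := by
    nlinarith [hsq, sq_nonneg (2 * lb * r - (LF + Hs / 2) * r ^ 2),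
      mul_nonneg (sub_nonneg.2 hlb_sq) (sq_nonneg r), sq_nonneg r, hr0, hlb0]
  have hdiv : ‖xnext - xstar‖ ^ 2
      ≤ (8 * S * r ^ 2 + (Hs + 2 * LF) ^ 2 / 2 * r ^ 4) / μ ^ 2 := by
    rw [le_div_iff₀ hμ2]
    nlinarith [hfin]
  refine hdiv.trans (le_of_eq ?_)
  field_simp
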